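/- Fix a positive integer k and let λ, μ, ν ∈ [0,k] be real numbers. The set T_{λ,μ}^ν is nonempty if and only if |λ−μ| ≤ ν ≤ min(λ+μ, 2k−λ−μ). -/

import Mathlib

open Matrix Complex Real

noncomputable section

/-- `SU(2)`: 2×2 complex unitary matrices with determinant 1. -/
def SU2 : Set (Matrix (Fin 2) (Fin 2) ℂ) :=
  {g | g ∈ Matrix.unitaryGroup (Fin 2) ℂ ∧ g.det = 1}

/-- The diagonal matrix `t_λ = diag(exp(iπλ/k), exp(−iπλ/k))`. -/
def tmat (k : ℕ) (l : ℝ) : Matrix (Fin 2) (Fin 2) ℂ :=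
  Matrix.diagonal ![Complex.exp (Complex.I * ((Real.pi * l / k : ℝ) : ℂ)),
    Complex.exp (-(Complex.I * ((Real.pi * l / k : ℝ) : ℂ)))]

/-- The conjugacy class `C_λ` of `t_λ` in `SU(2)`. -/
def conjClass (k : ℕ) (l : ℝ) : Set (Matrix (Fin 2) (Fin 2) ℂ) :=
  {g | ∃ x ∈ SU2, g = x * tmat k l * x⁻¹}

/-- `T_{λ,μ}^ν = {(g,h) : g ∈ C_λ, h ∈ C_μ, g·h ∈ C_ν}`. -/
def Tset (k : ℕ) (l m n : ℝ) :
    Set (Matrix (Fin 2) (Fin 2) ℂ × Matrix (Fin 2) (Fin 2) ℂ) :=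
  {p | p.1 ∈ conjClass k l ∧ p.2 ∈ conjClass k m ∧ p.1 * p.2 ∈ conjClass k n}

local notation "conj'" => (starRingEnd ℂ)

lemma mem_SU2_iff {g : Matrix (Fin 2) (Fin 2) ℂ} :
    g ∈ SU2 ↔ ∃ a b : ℂ, Complex.normSq a + Complex.normSq b = 1 ∧
      g = !![a, -conj' b; b, conj' a] := by
  constructor
  · rintro ⟨hu, hdet⟩
    have h1 : g * star g = 1 := (Matrix.mem_unitaryGroup_iff).1 hu
    have h2 : g * g.adjugate = 1 := by rw [Matrix.mul_adjugate, hdet, one_smul]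
    have e : star g = g.adjugate := by
      rw [← Matrix.inv_eq_right_inv h1, ← Matrix.inv_eq_right_inv h2]
    rw [Matrix.adjugate_fin_two] at e
    have e00 := congrFun (congrFun e 0) 0
    have e10 := congrFun (congrFun e 0) 1
    simp [Matrix.star_apply] at e00 e10
    have h01 : g 0 1 = -conj' (g 1 0) := by rw [e10]; ring
    have h11 : g 1 1 = conj' (g 0 0) := e00.symm
    refine ⟨g 0 0, g 1 0, ?_, ?_⟩
    · have hd : g 0 0 * g 1 1 - g 0 1 * g 1 0 = 1 := by rw [← Matrix.det_fin_two g]; exact hdet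
      have : (↑(normSq (g 0 0)) : ℂ) + ↑(normSq (g 1 0)) = 1 := by
        rw [← Complex.mul_conj, ← Complex.mul_conj]
        linear_combination hd + g 0 0 * e00 + g 1 0 * e10
      exact_mod_cast this
    · ext i j; fin_cases i <;> fin_cases j <;> simp [h01, h11]
  · rintro ⟨a, b, hn, rfl⟩
    have hn' : (↑(normSq a) : ℂ) + ↑(normSq b) = 1 := by exact_mod_cast hn
    have ha := Complex.mul_conj a
    have hb := Complex.mul_conj b
    constructor
    · rw [Matrix.mem_unitaryGroup_iff]
      ext i j
      fin_cases i <;> fin_cases j <;>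
        simp [Matrix.mul_apply, Fin.sum_univ_two, Matrix.star_apply, Matrix.one_apply] <;>
        first
          | linear_combination ha + hb + hn'
          | ring
    · rw [Matrix.det_fin_two_of]
      linear_combination ha + hb + hn'


lemma SU2.one_mem : (1 : Matrix (Fin 2) (Fin 2) ℂ) ∈ SU2 :=
  ⟨Submonoid.one_mem _, Matrix.det_one⟩

lemma SU2.mul_mem {g h : Matrix (Fin 2) (Fin 2) ℂ} (hg : g ∈ SU2) (hh : h ∈ SU2) :
    g * h ∈ SU2 :=
  ⟨(Matrix.unitaryGroup (Fin 2) ℂ).mul_mem hg.1 hh.1, by rw [Matrix.det_mul, hg.2, hh.2, one_mul]⟩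

lemma SU2.inv_eq_star {g : Matrix (Fin 2) (Fin 2) ℂ} (hg : g ∈ SU2) : g⁻¹ = star g :=
  Matrix.inv_eq_right_inv ((Matrix.mem_unitaryGroup_iff).1 hg.1)

lemma SU2.inv_mem {g : Matrix (Fin 2) (Fin 2) ℂ} (hg : g ∈ SU2) : g⁻¹ ∈ SU2 := by
  rw [SU2.inv_eq_star hg]
  refine ⟨Unitary.star_mem hg.1, ?_⟩
  have : (star g).det = star g.det := Matrix.det_conjTranspose g
  rw [this, hg.2]; simp

lemma SU2.det_isUnit {g : Matrix (Fin 2) (Fin 2) ℂ} (hg : g ∈ SU2) : IsUnit g.det := by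
  rw [hg.2]; exact isUnit_one

/-- trace is invariant under conjugation by SU2 elements -/
lemma trace_conj_eq {x M : Matrix (Fin 2) (Fin 2) ℂ} (hx : x ∈ SU2) :
    (x * M * x⁻¹).trace = M.trace := by
  rw [Matrix.trace_mul_comm, ← mul_assoc, Matrix.nonsing_inv_mul x (SU2.det_isUnit hx), one_mul]

lemma exp_add_exp_neg (x : ℝ) :
    Complex.exp (Complex.I * (x : ℂ)) + Complex.exp (-(Complex.I * (x : ℂ)))
      = ((2 * Real.cos x : ℝ) : ℂ) := by
  rw [show Complex.I * (x:ℂ) = (x:ℂ) * I by ring]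
  rw [show -((x:ℂ) * I) = (-x:ℂ) * I by ring]
  rw [Complex.exp_mul_I, Complex.exp_mul_I, Complex.cos_neg, Complex.sin_neg,
    ← Complex.ofReal_cos]
  push_cast
  ring

lemma tmat_eq (k : ℕ) (l : ℝ) :
    tmat k l = !![Complex.exp (Complex.I * ((Real.pi * l / k : ℝ) : ℂ)), 0;
      0, Complex.exp (-(Complex.I * ((Real.pi * l / k : ℝ) : ℂ)))] := by
  ext i j; fin_cases i <;> fin_cases j <;> simp [tmat, Matrix.diagonal]

lemma trace_tmat (k : ℕ) (l : ℝ) :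
    (tmat k l).trace = ((2 * Real.cos (Real.pi * l / k) : ℝ) : ℂ) := by
  rw [tmat_eq, Matrix.trace_fin_two_of, exp_add_exp_neg]

lemma conj_exp_I (c : ℝ) :
    conj' (Complex.exp (Complex.I * (c:ℂ))) = Complex.exp (-(Complex.I * (c:ℂ))) := by
  rw [← Complex.exp_conj]
  congr 1
  simp [_root_.map_mul, Complex.conj_I, Complex.conj_ofReal]

lemma exp_I_mul_exp_neg (c : ℝ) :
    Complex.exp (Complex.I * (c:ℂ)) * Complex.exp (-(Complex.I * (c:ℂ))) = 1 := by
  rw [← Complex.exp_add]; simp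

lemma normSq_exp_I (c : ℝ) : Complex.normSq (Complex.exp (Complex.I * (c:ℂ))) = 1 := by
  have h := Complex.mul_conj (Complex.exp (Complex.I * (c:ℂ)))
  rw [conj_exp_I, exp_I_mul_exp_neg] at h
  exact_mod_cast h.symm

lemma tmat_mem_SU2 (k : ℕ) (l : ℝ) : tmat k l ∈ SU2 := by
  rw [mem_SU2_iff]
  refine ⟨Complex.exp (Complex.I * ((Real.pi * l / k : ℝ):ℂ)), 0, by simp only [Complex.normSq_zero, add_zero]; exact normSq_exp_I _, ?_⟩
  rw [tmat_eq, conj_exp_I]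
  norm_num

lemma star_fin_two (a b c d : ℂ) :
    star !![a, b; c, d] = !![conj' a, conj' c; conj' b, conj' d] := by
  ext i j; fin_cases i <;> fin_cases j <;> simp [Matrix.star_apply]

lemma form_inv (a b : ℂ) (hn : Complex.normSq a + Complex.normSq b = 1) :
    (!![a, -conj' b; b, conj' a])⁻¹ = !![conj' a, conj' b; -b, a] := by
  rw [SU2.inv_eq_star (mem_SU2_iff.2 ⟨a, b, hn, rfl⟩), star_fin_two]
  simp

lemma exp_split (x y : ℝ) :
    Complex.exp (Complex.I * ((x + y : ℝ) : ℂ))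
      = Complex.exp (Complex.I * (x:ℂ)) * Complex.exp (Complex.I * (y:ℂ)) := by
  rw [← Complex.exp_add]; congr 1; push_cast; ring

lemma exp_split_neg (x y : ℝ) :
    Complex.exp (-(Complex.I * ((x + y : ℝ) : ℂ)))
      = Complex.exp (-(Complex.I * (x:ℂ))) * Complex.exp (-(Complex.I * (y:ℂ))) := by
  rw [← Complex.exp_add]; congr 1; push_cast; ring

lemma trace_key (k : ℕ) (l m : ℝ) (a b : ℂ)
    (hn : Complex.normSq a + Complex.normSq b = 1) :
    (tmat k l * (!![a, -conj' b; b, conj' a] * tmat k m *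
        (!![a, -conj' b; b, conj' a])⁻¹)).trace
      = ((Complex.normSq a * (2 * Real.cos (Real.pi*l/k + Real.pi*m/k))
          + Complex.normSq b * (2 * Real.cos (Real.pi*l/k - Real.pi*m/k)) : ℝ) : ℂ) := by
  have ha := Complex.mul_conj a
  have hb := Complex.mul_conj b
  have e1 := exp_add_exp_neg (Real.pi*l/k + Real.pi*m/k)
  have e2 := exp_add_exp_neg (Real.pi*l/k + (-(Real.pi*m/k)))
  rw [exp_split, exp_split_neg] at e1
  rw [exp_split, exp_split_neg] at e2
  simp only [Complex.ofReal_neg, mul_neg, neg_neg] at e2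
  rw [form_inv a b hn, tmat_eq, tmat_eq]
  simp only [Matrix.mul_fin_two, Matrix.trace_fin_two_of]
  rw [show ((Complex.normSq a * (2 * Real.cos (Real.pi*l/k + Real.pi*m/k))
          + Complex.normSq b * (2 * Real.cos (Real.pi*l/k - Real.pi*m/k)) : ℝ) : ℂ)
      = ((Complex.normSq a : ℝ):ℂ) * ((2 * Real.cos (Real.pi*l/k + Real.pi*m/k) : ℝ):ℂ)
        + ((Complex.normSq b : ℝ):ℂ) * ((2 * Real.cos (Real.pi*l/k + (-(Real.pi*m/k))) : ℝ):ℂ) by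
    push_cast; ring_nf, ← e1, ← e2]
  linear_combination (norm := ring_nf)
    (Complex.exp (Complex.I * ((Real.pi*l/k : ℝ):ℂ)) * Complex.exp (Complex.I * ((Real.pi*m/k : ℝ):ℂ))
      + Complex.exp (-(Complex.I * ((Real.pi*l/k : ℝ):ℂ))) * Complex.exp (-(Complex.I * ((Real.pi*m/k : ℝ):ℂ)))) * ha
    + (Complex.exp (Complex.I * ((Real.pi*l/k : ℝ):ℂ)) * Complex.exp (-(Complex.I * ((Real.pi*m/k : ℝ):ℂ)))
      + Complex.exp (-(Complex.I * ((Real.pi*l/k : ℝ):ℂ))) * Complex.exp (Complex.I * ((Real.pi*m/k : ℝ):ℂ))) * hb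

set_option maxHeartbeats 2000000 in
lemma key_eq (co S y rN : ℝ) (γ : ℂ) (hrNne : ((rN:ℝ):ℂ) ≠ 0)
    (hγc : γ * conj' γ = ((S^2 - y^2 : ℝ):ℂ)) :
    !![(co:ℂ)+(y:ℂ)*I, -conj' γ; γ, (co:ℂ)-(y:ℂ)*I] *
      !![conj' γ/(rN:ℂ), ((y-S:ℝ):ℂ)*I/(rN:ℂ); ((y-S:ℝ):ℂ)*I/(rN:ℂ), γ/(rN:ℂ)]
    = !![conj' γ/(rN:ℂ), ((y-S:ℝ):ℂ)*I/(rN:ℂ); ((y-S:ℝ):ℂ)*I/(rN:ℂ), γ/(rN:ℂ)] *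
      !![(co:ℂ)+(S:ℂ)*I, 0; 0, (co:ℂ)-(S:ℂ)*I] := by
  push_cast at hγc
  rw [Matrix.mul_fin_two, Matrix.mul_fin_two]
  ext i j
  fin_cases i <;> fin_cases j <;>
    simp only [Matrix.of_apply, Matrix.cons_val', Matrix.cons_val_zero, Matrix.cons_val_one, Matrix.head_cons,
      Matrix.empty_val', Matrix.cons_val_fin_one, Matrix.head_fin_const] <;>
    push_cast <;>
    field_simp <;>
    first
    | ring1
    | linear_combination hγc + ((S:ℂ)^2 - (y:ℂ)^2) * Complex.I_sq
    | linear_combination -hγc + ((y:ℂ)^2 - (S:ℂ)^2) * Complex.I_sq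

lemma conj_mem_conjClass {k : ℕ} {n : ℝ} {z M : Matrix (Fin 2) (Fin 2) ℂ}
    (hz : z ∈ SU2) (hMz : M * z = z * tmat k n) : M ∈ conjClass k n := by
  refine ⟨z, hz, ?_⟩
  calc M = M * (z * z⁻¹) := by rw [Matrix.mul_nonsing_inv z (SU2.det_isUnit hz), mul_one]
  _ = (M * z) * z⁻¹ := by rw [mul_assoc]
  _ = z * tmat k n * z⁻¹ := by rw [hMz]

lemma mem_conjClass_of_trace (k : ℕ) (hk : 0 < k) (n : ℝ) (hn : n ∈ Set.Icc (0:ℝ) k)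
    (M : Matrix (Fin 2) (Fin 2) ℂ) (hM : M ∈ SU2)
    (htr : M.trace = ((2 * Real.cos (Real.pi*n/k) : ℝ) : ℂ)) :
    M ∈ conjClass k n := by
  set C : ℝ := Real.pi*n/k with hC
  have hk' : (0:ℝ) < k := by exact_mod_cast hk
  have hC0 : 0 ≤ C := by
    apply div_nonneg (mul_nonneg Real.pi_pos.le hn.1) hk'.le
  have hCpi : C ≤ Real.pi := by
    rw [hC, div_le_iff₀ hk']
    nlinarith [hn.2, Real.pi_pos]
  set S : ℝ := Real.sin C with hS
  set co : ℝ := Real.cos C with hco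
  have hS0 : 0 ≤ S := Real.sin_nonneg_of_nonneg_of_le_pi hC0 hCpi
  have hsc : S^2 + co^2 = 1 := Real.sin_sq_add_cos_sq C
  -- exp values
  have hE : Complex.exp (Complex.I * (C:ℂ)) = (co:ℂ) + (S:ℂ) * I := by
    rw [show Complex.I * (C:ℂ) = (C:ℂ) * I by ring, Complex.exp_mul_I,
      ← Complex.ofReal_cos, ← Complex.ofReal_sin]
  have hE' : Complex.exp (-(Complex.I * (C:ℂ))) = (co:ℂ) - (S:ℂ) * I := by
    rw [← conj_exp_I, hE]
    simp [map_add, _root_.map_mul, Complex.conj_I, Complex.conj_ofReal]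
    ring
  obtain ⟨α, γ, hnorm, rfl⟩ := mem_SU2_iff.1 hM
  rw [Matrix.trace_fin_two_of] at htr
  have hre : α.re = co := by
    have h1 : α + conj' α = ((2 * α.re : ℝ) : ℂ) := by
      rw [Complex.add_conj]
    rw [h1] at htr
    have := Complex.ofReal_inj.1 htr
    linarith
  set y : ℝ := α.im with hy
  have hα : α = (co:ℂ) + (y:ℂ) * I := by
    rw [← hre, hy]; exact (Complex.re_add_im α).symm
  have hαc : conj' α = (co:ℂ) - (y:ℂ) * I := by
    rw [hα]; simp [map_add, _root_.map_mul, Complex.conj_I, Complex.conj_ofReal]; ring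
  have hnsγ : Complex.normSq γ = S^2 - y^2 := by
    have h2 : Complex.normSq α = co^2 + y^2 := by
      rw [Complex.normSq_apply, hre, ← hy]; ring
    nlinarith [hnorm]
  have hγc : γ * conj' γ = ((S^2 - y^2 : ℝ) : ℂ) := by
    rw [Complex.mul_conj, hnsγ]
  by_cases hγ : γ = 0
  · -- diagonal case
    have hy2 : (y - S) * (y + S) = 0 := by
      have : Complex.normSq γ = 0 := by rw [hγ]; simp
      rw [hnsγ] at this; nlinarith
    rcases mul_eq_zero.1 hy2 with h | h
    · -- y = S : M = tmat
      have hyS : y = S := by linarith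
      refine ⟨1, SU2.one_mem, ?_⟩
      rw [inv_one, mul_one, one_mul, tmat_eq, hγ, hαc, hα, hyS, ← hC, hE, hE']
      norm_num
    · -- y = -S
      have hyS : y = -S := by linarith
      have hx : !![(0:ℂ), -1; 1, 0] ∈ SU2 := by
        rw [mem_SU2_iff]
        exact ⟨0, 1, by simp, by norm_num⟩
      refine conj_mem_conjClass hx ?_
      rw [tmat_eq, hγ, hαc, hα, hyS, ← hC, Matrix.mul_fin_two, Matrix.mul_fin_two, hE, hE']
      norm_num
      constructor <;> ring
  · -- generic case
    have hnsγpos : 0 < S^2 - y^2 := by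
      rw [← hnsγ]; exact Complex.normSq_pos.2 hγ
    have hSpos : 0 < S := by nlinarith
    have hySlt : y < S := by nlinarith
    set N : ℝ := 2 * S * (S - y) with hN
    have hNpos : 0 < N := by rw [hN]; nlinarith
    set rN : ℝ := Real.sqrt N with hrN
    have hrNpos : 0 < rN := Real.sqrt_pos.2 hNpos
    have hrNsq : rN^2 = N := Real.sq_sqrt hNpos.le
    have hrNne : ((rN:ℝ):ℂ) ≠ 0 := by exact_mod_cast hrNpos.ne'
    have hncq : -conj' (((y-S:ℝ):ℂ)*I/(rN:ℂ)) = ((y-S:ℝ):ℂ)*I/(rN:ℂ) := by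
      rw [map_div₀, _root_.map_mul, Complex.conj_I, Complex.conj_ofReal, Complex.conj_ofReal]
      ring
    have hcp : conj' (conj' γ/(rN:ℂ)) = γ/(rN:ℂ) := by
      rw [map_div₀, Complex.conj_conj, Complex.conj_ofReal]
    have hzmem : !![conj' γ/(rN:ℂ), ((y-S:ℝ):ℂ)*I/(rN:ℂ);
        ((y-S:ℝ):ℂ)*I/(rN:ℂ), γ/(rN:ℂ)] ∈ SU2 := by
      rw [mem_SU2_iff]
      refine ⟨conj' γ/(rN:ℂ), ((y-S:ℝ):ℂ)*I/(rN:ℂ), ?_, ?_⟩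
      · rw [Complex.normSq_div, Complex.normSq_div, Complex.normSq_conj,
          Complex.normSq_mul, Complex.normSq_I, Complex.normSq_ofReal, Complex.normSq_ofReal,
          hnsγ]
        have hrr : rN * rN = N := by nlinarith
        rw [hrr, hN]
        field_simp [(sub_pos.2 hySlt).ne']
        ring
      · rw [hncq, hcp]
    refine conj_mem_conjClass hzmem ?_
    rw [tmat_eq, ← hC, hE, hE', hαc, hα]
    exact key_eq co S y rN γ hrNne hγc

lemma real_iffs (A B C : ℝ) (hA : A ∈ Set.Icc 0 π) (hB : B ∈ Set.Icc 0 π)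
    (hC : C ∈ Set.Icc 0 π) :
    (∃ s : ℝ, 0 ≤ s ∧ s ≤ 1 ∧
        Real.cos C = s * Real.cos (A+B) + (1-s) * Real.cos (A-B)) ↔
      (|A-B| ≤ C ∧ C ≤ A+B ∧ C ≤ 2*π - A - B) := by
  have hABmem : |A-B| ∈ Set.Icc 0 π := by
    constructor
    · exact abs_nonneg _
    · rw [abs_le]; constructor <;> [linarith [hA.1, hB.2]; linarith [hA.2, hB.1]]
  have hd : Real.cos (A-B) - Real.cos (A+B) = 2 * Real.sin A * Real.sin B := by
    rw [Real.cos_sub, Real.cos_add]; ring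
  have hsA : 0 ≤ Real.sin A := Real.sin_nonneg_of_nonneg_of_le_pi hA.1 hA.2
  have hsB : 0 ≤ Real.sin B := Real.sin_nonneg_of_nonneg_of_le_pi hB.1 hB.2
  constructor
  · rintro ⟨s, hs0, hs1, heq⟩
    have hprod : 0 ≤ Real.sin A * Real.sin B := mul_nonneg hsA hsB
    have hlow : Real.cos (A+B) ≤ Real.cos C := by
      nlinarith [mul_nonneg (by linarith : (0:ℝ) ≤ 1-s) hprod]
    have hhigh : Real.cos C ≤ Real.cos (A-B) := by
      nlinarith [mul_nonneg hs0 hprod]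
    refine ⟨?_, ?_, ?_⟩
    · by_contra hcon
      push_neg at hcon
      have := Real.strictAntiOn_cos hC hABmem hcon
      rw [Real.cos_abs] at this
      linarith
    · by_cases hpi : π ≤ A + B
      · linarith [hC.2]
      · push_neg at hpi
        by_contra hcon
        push_neg at hcon
        have := Real.strictAntiOn_cos ⟨by linarith [hA.1, hB.1], hpi.le⟩ hC hcon
        linarith
    · by_cases hpi : A + B ≤ π
      · linarith [hC.2]
      · push_neg at hpi
        by_contra hcon
        push_neg at hcon
        have hDmem : 2*π - A - B ∈ Set.Icc 0 π := by
          constructor <;> [linarith [hA.2, hB.2]; linarith]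
        have h2 := Real.strictAntiOn_cos hDmem hC hcon
        rw [show 2*π - A - B = 2*π - (A+B) by ring, Real.cos_two_pi_sub] at h2
        linarith
  · rintro ⟨h1, h2, h3⟩
    have hhigh : Real.cos C ≤ Real.cos (A-B) := by
      have := Real.cos_le_cos_of_nonneg_of_le_pi (abs_nonneg (A-B)) hC.2 h1
      rwa [Real.cos_abs] at this
    have hlow : Real.cos (A+B) ≤ Real.cos C := by
      by_cases hpi : A + B ≤ π
      · exact Real.cos_le_cos_of_nonneg_of_le_pi hC.1 hpi h2
      · push_neg at hpi
        have := Real.cos_le_cos_of_nonneg_of_le_pi hC.1 (by linarith : 2*π - A - B ≤ π) h3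
        rwa [show 2*π - A - B = 2*π - (A+B) by ring, Real.cos_two_pi_sub] at this
    set d : ℝ := Real.cos (A-B) - Real.cos (A+B) with hdd
    have hd0 : 0 ≤ d := by nlinarith
    rcases eq_or_lt_of_le hd0 with hd1 | hd1
    · refine ⟨0, le_refl 0, zero_le_one, ?_⟩
      have : Real.cos C = Real.cos (A-B) := le_antisymm hhigh (by nlinarith)
      rw [this]; ring
    · refine ⟨(Real.cos (A-B) - Real.cos C)/d, div_nonneg (by linarith) hd1.le, ?_, ?_⟩
      · rw [div_le_one hd1]; nlinarith
      · field_simp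
        ring

theorem stmt0 (k : ℕ) (hk : 0 < k) (lam mu nu : ℝ)
    (hlam : lam ∈ Set.Icc (0:ℝ) k) (hmu : mu ∈ Set.Icc (0:ℝ) k)
    (hnu : nu ∈ Set.Icc (0:ℝ) k) :
    (Tset k lam mu nu).Nonempty ↔
      |lam - mu| ≤ nu ∧ nu ≤ min (lam + mu) (2 * k - lam - mu) := by

  have hk' : (0:ℝ) < k := by exact_mod_cast hk
  have hrange : ∀ x : ℝ, x ∈ Set.Icc (0:ℝ) k → Real.pi * x / k ∈ Set.Icc 0 Real.pi := by
    intro x hx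
    constructor
    · exact div_nonneg (mul_nonneg Real.pi_pos.le hx.1) hk'.le
    · rw [div_le_iff₀ hk']; nlinarith [Real.pi_pos, hx.2]
  have hAm := hrange lam hlam
  have hBm := hrange mu hmu
  have hCm := hrange nu hnu
  have hineq : (|Real.pi * lam / k - Real.pi * mu / k| ≤ Real.pi * nu / k ∧
      Real.pi * nu / k ≤ Real.pi * lam / k + Real.pi * mu / k ∧
      Real.pi * nu / k ≤ 2*Real.pi - Real.pi * lam / k - Real.pi * mu / k) ↔
      (|lam - mu| ≤ nu ∧ nu ≤ min (lam + mu) (2 * k - lam - mu)) := by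
    rw [le_min_iff]
    have e1 : |Real.pi * lam / k - Real.pi * mu / k| = Real.pi * |lam - mu| / k := by
      rw [show Real.pi * lam / k - Real.pi * mu / k = Real.pi * (lam - mu) / k by ring,
        abs_div, abs_mul, abs_of_pos Real.pi_pos, abs_of_pos hk']
    have e2 : Real.pi * lam / k + Real.pi * mu / k = Real.pi * (lam + mu) / k := by ring
    have e3 : 2*Real.pi - Real.pi * lam / k - Real.pi * mu / k
        = Real.pi * (2*k - lam - mu) / k := by field_simp
    have key : ∀ u v : ℝ, Real.pi * u / k ≤ Real.pi * v / k ↔ u ≤ v := by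
      intro u v
      rw [show Real.pi*u/(k:ℝ) = u*(Real.pi/k) by ring,
        show Real.pi*v/(k:ℝ) = v*(Real.pi/k) by ring]
      exact mul_le_mul_iff_of_pos_right (div_pos Real.pi_pos hk')
    rw [e1, e2, e3, key, key, key]
  rw [← hineq, ← real_iffs _ _ _ hAm hBm hCm]
  constructor
  · rintro ⟨⟨g, h⟩, ⟨x, hx, rfl⟩, ⟨y, hy, rfl⟩, ⟨z, hz, hz2⟩⟩
    have hxdet := SU2.det_isUnit hx
    have hw : x⁻¹ * y ∈ SU2 := SU2.mul_mem (SU2.inv_mem hx) hy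
    obtain ⟨a, b, hab, hwf⟩ := mem_SU2_iff.1 hw
    have htr1 : ((x * tmat k lam * x⁻¹) * (y * tmat k mu * y⁻¹)).trace
        = ((2 * Real.cos (Real.pi * nu / k) : ℝ) : ℂ) := by
      rw [hz2, trace_conj_eq hz, trace_tmat]
    have hmul : (x * tmat k lam * x⁻¹) * (y * tmat k mu * y⁻¹)
        = x * (tmat k lam * ((x⁻¹*y) * tmat k mu * (x⁻¹*y)⁻¹)) * x⁻¹ := by
      rw [Matrix.mul_inv_rev, Matrix.nonsing_inv_nonsing_inv x hxdet]
      have hxx : x * x⁻¹ = 1 := Matrix.mul_nonsing_inv x hxdet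
      simp only [← mul_assoc]
      rw [mul_assoc (x * tmat k lam * x⁻¹ * y * tmat k mu * y⁻¹) x x⁻¹, hxx, mul_one]
    have htr2 := trace_key k lam mu a b hab
    rw [← hwf] at htr2
    have htr3 : ((2 * Real.cos (Real.pi * nu / k) : ℝ) : ℂ)
        = ((Complex.normSq a * (2 * Real.cos (Real.pi*lam/k + Real.pi*mu/k))
            + Complex.normSq b * (2 * Real.cos (Real.pi*lam/k - Real.pi*mu/k)) : ℝ) : ℂ) := by
      calc ((2 * Real.cos (Real.pi * nu / k) : ℝ) : ℂ)
          = ((x * tmat k lam * x⁻¹) * (y * tmat k mu * y⁻¹)).trace := htr1.symm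
        _ = (tmat k lam * ((x⁻¹*y) * tmat k mu * (x⁻¹*y)⁻¹)).trace := by
            rw [hmul, trace_conj_eq hx]
        _ = _ := htr2
    have hreal := Complex.ofReal_inj.1 htr3
    have hb1 : Complex.normSq b = 1 - Complex.normSq a := by linarith
    refine ⟨Complex.normSq a, Complex.normSq_nonneg a,
      by nlinarith [Complex.normSq_nonneg b], ?_⟩
    linear_combination (1/2) * hreal + Real.cos (Real.pi*lam/k - Real.pi*mu/k) * hb1
  · rintro ⟨s, hs0, hs1, heq⟩
    have hna : Complex.normSq ((Real.sqrt s : ℝ) : ℂ) = s := by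
      rw [Complex.normSq_ofReal]; exact Real.mul_self_sqrt hs0
    have hnb : Complex.normSq ((Real.sqrt (1-s) : ℝ) : ℂ) = 1 - s := by
      rw [Complex.normSq_ofReal]; exact Real.mul_self_sqrt (by linarith)
    have hab : Complex.normSq ((Real.sqrt s : ℝ) : ℂ)
        + Complex.normSq ((Real.sqrt (1-s) : ℝ) : ℂ) = 1 := by rw [hna, hnb]; ring
    set w : Matrix (Fin 2) (Fin 2) ℂ :=
      !![((Real.sqrt s : ℝ) : ℂ), -(starRingEnd ℂ) ((Real.sqrt (1-s) : ℝ) : ℂ);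
        ((Real.sqrt (1-s) : ℝ) : ℂ), (starRingEnd ℂ) ((Real.sqrt s : ℝ) : ℂ)] with hwdef
    have hw : w ∈ SU2 := mem_SU2_iff.2 ⟨_, _, hab, rfl⟩
    refine ⟨(tmat k lam, w * tmat k mu * w⁻¹),
      ⟨1, SU2.one_mem, by rw [inv_one, mul_one, one_mul]⟩, ⟨w, hw, rfl⟩, ?_⟩
    apply mem_conjClass_of_trace k hk nu hnu
    · exact SU2.mul_mem (tmat_mem_SU2 k lam)
        (SU2.mul_mem (SU2.mul_mem hw (tmat_mem_SU2 k mu)) (SU2.inv_mem hw))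
    · show (tmat k lam * (w * tmat k mu * w⁻¹)).trace = _
      rw [hwdef, trace_key k lam mu _ _ hab, hna, hnb]
      congr 1
      linear_combination (-2 : ℝ) * heq
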